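/- For k ≥ 4, let T_k be the tree obtained from the star K_{1,k} by subdividing every edge exactly three times. Then the open-open irredundance number of T_k equals 2(k+1). -/
import Mathlib


variable {V : Type*}

/-- `S` is a total dominating set of `G`: every vertex has a neighbor in `S`. -/
def isTDSet (G : SimpleGraph V) (S : Set V) : Prop := ∀ v : V, ∃ u ∈ S, G.Adj v u

/-- `S` is a minimal total dominating set of `G`. -/
def isMinTDSet (G : SimpleGraph V) (S : Set V) : Prop :=
  isTDSet G S ∧ ∀ T : Set V, T ⊂ S → ¬ isTDSet G T

/-- Upper total domination number `Γ_t`. -/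
noncomputable def upperTD (G : SimpleGraph V) [Fintype V] : ℕ :=
  sSup {n | ∃ S : Finset V, isMinTDSet G ↑S ∧ S.card = n}

/-- Total domination number `γ_t`. -/
noncomputable def totalDomNum (G : SimpleGraph V) [Fintype V] : ℕ :=
  sInf {n | ∃ S : Finset V, isTDSet G ↑S ∧ S.card = n}

/-- `S` is an open-open irredundant set: each `v ∈ S` has a neighbor not adjacent
to any other vertex of `S`, i.e. `N(v) \ N(S \ {v}) ≠ ∅`. -/
def isOOIrr (G : SimpleGraph V) (S : Set V) : Prop :=
  ∀ v ∈ S, ∃ w, G.Adj v w ∧ ∀ u ∈ S, u ≠ v → ¬ G.Adj u w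

/-- Open-open irredundance number `OOIR`. -/
noncomputable def ooirNum (G : SimpleGraph V) [Fintype V] : ℕ :=
  sSup {n | ∃ S : Finset V, isOOIrr G ↑S ∧ S.card = n}

/-- `M` is an induced matching: a set of edges of `G` whose endpoints induce a
1-regular subgraph (no two distinct edges share or join endpoints). -/
def isInducedMatching (G : SimpleGraph V) (M : Set (Sym2 V)) : Prop :=
  (∀ e ∈ M, e ∈ G.edgeSet) ∧
  ∀ e ∈ M, ∀ f ∈ M, e ≠ f → ∀ u ∈ e, ∀ v ∈ f, u ≠ v ∧ ¬ G.Adj u v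

/-- Induced matching number `ν_I`. -/
noncomputable def inducedMatchingNum (G : SimpleGraph V) [Fintype V] : ℕ :=
  sSup {n | ∃ M : Finset (Sym2 V), isInducedMatching G ↑M ∧ M.card = n}

/-- `L` is a total dominating sequence of `G`. -/
def isTDSeq (G : SimpleGraph V) (L : List V) : Prop :=
  L.Nodup ∧ isTDSet G {v | v ∈ L} ∧
  ∀ (i : ℕ) (h : i < L.length), ∃ w, G.Adj L[i] w ∧ ∀ u ∈ L.take i, ¬ G.Adj u w

/-- Grundy total domination number. -/
noncomputable def grundyTD (G : SimpleGraph V) [Fintype V] : ℕ :=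
  sSup {n | ∃ L : List V, isTDSeq G L ∧ L.length = n}


/-- The tree obtained from `K_{1,k}` by subdividing every edge three times: center
`v = Sum.inl ()` and paths `v, (i,0), (i,1), (i,2), (i,3)`, i.e. `v u_i v_i w_i x_i`. -/
def T3star (k : ℕ) : SimpleGraph (Unit ⊕ Fin k × Fin 4) :=
  SimpleGraph.fromRel (fun a b =>
    match a, b with
    | Sum.inl _, Sum.inr p => p.2 = 0
    | Sum.inr p, Sum.inr q => p.1 = q.1 ∧ (p.2 : ℕ) + 1 = (q.2 : ℕ)
    | _, _ => False)

namespace T3aux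


variable {k : ℕ}

lemma fv2 : ((2:Fin 4):ℕ) = 2 := rfl
lemma fv3 : ((3:Fin 4):ℕ) = 3 := rfl

lemma adj_c (b : Unit ⊕ Fin k × Fin 4) :
    (T3star k).Adj (Sum.inl ()) b ↔ ∃ j, b = Sum.inr (j, 0) := by
  rcases b with u | ⟨j, y⟩
  · simp [T3star, SimpleGraph.fromRel_adj]
  · simp only [T3star, SimpleGraph.fromRel_adj]
    constructor
    · rintro ⟨-, h | h⟩
      · exact ⟨j, by simp_all⟩
      · exact ⟨j, by simp_all⟩
    · rintro ⟨j', hj⟩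
      cases hj
      exact ⟨by simp, Or.inl rfl⟩

lemma adj0 (i : Fin k) (b) : (T3star k).Adj (Sum.inr (i,0)) b ↔ b = Sum.inl () ∨ b = Sum.inr (i,1) := by
  rcases b with u | ⟨j, y⟩
  · simp [T3star, SimpleGraph.fromRel_adj]
  · fin_cases y <;>
      simp [T3star, SimpleGraph.fromRel_adj, Prod.ext_iff, fv2, fv3] <;> aesop

lemma adj1 (i : Fin k) (b) : (T3star k).Adj (Sum.inr (i,1)) b ↔ b = Sum.inr (i,0) ∨ b = Sum.inr (i,2) := by
  rcases b with u | ⟨j, y⟩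
  · simp [T3star, SimpleGraph.fromRel_adj]
  · fin_cases y <;>
      simp [T3star, SimpleGraph.fromRel_adj, Prod.ext_iff, fv2, fv3] <;> aesop

lemma adj2 (i : Fin k) (b) : (T3star k).Adj (Sum.inr (i,2)) b ↔ b = Sum.inr (i,1) ∨ b = Sum.inr (i,3) := by
  rcases b with u | ⟨j, y⟩
  · simp [T3star, SimpleGraph.fromRel_adj]
  · fin_cases y <;>
      simp [T3star, SimpleGraph.fromRel_adj, Prod.ext_iff, fv2, fv3] <;> aesop

lemma adj3 (i : Fin k) (b) : (T3star k).Adj (Sum.inr (i,3)) b ↔ b = Sum.inr (i,2) := by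
  rcases b with u | ⟨j, y⟩
  · simp [T3star, SimpleGraph.fromRel_adj]
  · fin_cases y <;>
      simp [T3star, SimpleGraph.fromRel_adj, Prod.ext_iff, fv2, fv3] <;> aesop

/-- branch map -/
def g : (Unit ⊕ Fin k × Fin 4) → Option (Fin k) := fun v =>
  match v with
  | Sum.inl _ => none
  | Sum.inr p => some p.1

section Upper

variable {S : Finset (Unit ⊕ Fin k × Fin 4)} (h : isOOIrr (T3star k) ↑S)
include h

lemma H1 {i : Fin k} (h3 : Sum.inr (i,3) ∈ S) : Sum.inr (i,1) ∉ S := by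
  obtain ⟨w, hadj, hpriv⟩ := h _ (by exact_mod_cast h3)
  rw [adj3] at hadj
  subst hadj
  intro h1
  exact hpriv _ (by exact_mod_cast h1) (by simp)
    ((adj1 i _).mpr (Or.inr rfl))

lemma H2 {i : Fin k} (h0 : Sum.inr (i,0) ∈ S) (h2 : Sum.inr (i,2) ∈ S) :
    ∀ j, Sum.inr (j,(0:Fin 4)) ∈ S → j = i := by
  obtain ⟨w, hadj, hpriv⟩ := h _ (by exact_mod_cast h0)
  rw [adj0] at hadj
  rcases hadj with rfl | rfl
  · intro j hj
    by_contra hne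
    exact hpriv _ (by exact_mod_cast hj)
      (by simp [Prod.ext_iff]; intro hji; exact absurd hji hne)
      ((adj0 j _).mpr (Or.inl rfl))
  · exact absurd ((adj2 i _).mpr (Or.inl rfl))
      (hpriv _ (by exact_mod_cast h2) (by simp))

lemma Hstruct (i : Fin k) :
    (S.filter (fun v => g v = some i)).card ≤ 3 ∧
    (3 ≤ (S.filter (fun v => g v = some i)).card →
      Sum.inr (i,(0:Fin 4)) ∈ S ∧ Sum.inr (i,(2:Fin 4)) ∈ S) := by
  set T := S.filter (fun v => g v = some i) with hT
  have hsub4 : ∀ v ∈ T, ∃ y : Fin 4, v = Sum.inr (i, y) := by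
    intro v hv
    obtain ⟨-, hg⟩ := Finset.mem_filter.mp hv
    rcases v with u | ⟨j, y⟩
    · simp [g] at hg
    · simp only [g, Option.some.injEq] at hg
      exact ⟨y, by rw [hg]⟩
  by_cases h3 : Sum.inr (i,(3:Fin 4)) ∈ S
  · have h1 := H1 h h3
    have hsub : T ⊆ {Sum.inr (i,0), Sum.inr (i,2), Sum.inr (i,3)} := by
      intro v hv
      obtain ⟨y, rfl⟩ := hsub4 v hv
      have hvS := (Finset.mem_filter.mp hv).1
      fin_cases y <;> simp_all
    have hcard : ({Sum.inr (i,0), Sum.inr (i,2), Sum.inr (i,3)} :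
        Finset (Unit ⊕ Fin k × Fin 4)).card = 3 := by
      rw [Finset.card_insert_of_notMem (by simp),
        Finset.card_insert_of_notMem (by simp),
        Finset.card_singleton]
    refine ⟨hcard ▸ Finset.card_le_card hsub, fun hge => ?_⟩
    have heq : T = {Sum.inr (i,0), Sum.inr (i,2), Sum.inr (i,3)} :=
      Finset.eq_of_subset_of_card_le hsub (by omega)
    have h0T : Sum.inr (i,(0:Fin 4)) ∈ T := by rw [heq]; simp
    have h2T : Sum.inr (i,(2:Fin 4)) ∈ T := by rw [heq]; simp
    exact ⟨(Finset.mem_filter.mp h0T).1, (Finset.mem_filter.mp h2T).1⟩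
  · have hsub : T ⊆ {Sum.inr (i,0), Sum.inr (i,1), Sum.inr (i,2)} := by
      intro v hv
      obtain ⟨y, rfl⟩ := hsub4 v hv
      have hvS := (Finset.mem_filter.mp hv).1
      fin_cases y <;> simp_all
    have hcard : ({Sum.inr (i,0), Sum.inr (i,1), Sum.inr (i,2)} :
        Finset (Unit ⊕ Fin k × Fin 4)).card = 3 := by
      rw [Finset.card_insert_of_notMem (by simp),
        Finset.card_insert_of_notMem (by simp),
        Finset.card_singleton]
    refine ⟨hcard ▸ Finset.card_le_card hsub, fun hge => ?_⟩
    have heq : T = {Sum.inr (i,0), Sum.inr (i,1), Sum.inr (i,2)} :=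
      Finset.eq_of_subset_of_card_le hsub (by omega)
    have h0T : Sum.inr (i,(0:Fin 4)) ∈ T := by rw [heq]; simp
    have h2T : Sum.inr (i,(2:Fin 4)) ∈ T := by rw [heq]; simp
    exact ⟨(Finset.mem_filter.mp h0T).1, (Finset.mem_filter.mp h2T).1⟩

lemma upper (hk : 1 ≤ k) : S.card ≤ 2 * (k + 1) := by
  rw [Finset.card_eq_sum_card_fiberwise
    (f := g) (t := Finset.univ) (fun x _ => Finset.mem_univ _)]
  rw [Fintype.sum_option]
  have hnone : (S.filter (fun v => g v = none)).card ≤ 1 := by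
    have : S.filter (fun v => g v = none) ⊆ {Sum.inl ()} := by
      intro v hv
      obtain ⟨-, hg⟩ := Finset.mem_filter.mp hv
      rcases v with u | p
      · simp
      · simp [g] at hg
    simpa using Finset.card_le_card this
  set F := fun i => (S.filter (fun v => g v = some i)).card with hF
  by_cases hex : ∃ i, 3 ≤ F i
  · obtain ⟨i0, hi0⟩ := hex
    obtain ⟨h0, h2⟩ := (Hstruct h i0).2 hi0
    have hrest : ∀ j ∈ Finset.univ.erase i0, F j ≤ 2 := by
      intro j hj
      have hne : j ≠ i0 := (Finset.mem_erase.mp hj).1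
      by_contra hc
      have h3j : 3 ≤ F j := by omega
      obtain ⟨hj0, -⟩ := (Hstruct h j).2 h3j
      exact hne (H2 h h0 h2 j hj0 ▸ rfl)

    have hrb : ∑ j ∈ Finset.univ.erase i0, F j ≤ (k - 1) * 2 := by
      have := Finset.sum_le_card_nsmul (Finset.univ.erase i0) F 2 hrest
      have hcard : (Finset.univ.erase i0).card = k - 1 := by
        rw [Finset.card_erase_of_mem (Finset.mem_univ i0)]
        simp
      rw [hcard] at this
      simpa [smul_eq_mul] using this
    have hFi0 : F i0 ≤ 3 := (Hstruct h i0).1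
    rw [show (∑ i, F i) = F i0 + ∑ j ∈ Finset.univ.erase i0, F j from
      (Finset.add_sum_erase Finset.univ F (Finset.mem_univ i0)).symm]
    omega
  · push_neg at hex
    have hall : ∀ i ∈ Finset.univ, F i ≤ 2 := fun i _ => by
      have := hex i; omega
    have h2 := Finset.sum_le_card_nsmul Finset.univ F 2 hall
    simp only [Finset.card_univ, Fintype.card_fin, smul_eq_mul] at h2
    have h3 : (∑ i, F i) ≤ k * 2 := le_trans (le_of_eq rfl) h2
    omega

end Upper


lemma lower (hk : 4 ≤ k) : ∃ S : Finset (Unit ⊕ Fin k × Fin 4),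
    isOOIrr (T3star k) ↑S ∧ S.card = 2 * (k + 1) := by
  classical
  set i0 : Fin k := ⟨0, by omega⟩ with hi0
  set P : (Unit ⊕ Fin k × Fin 4) → Prop := fun v =>
    v = Sum.inl () ∨ v = Sum.inr (i0, 0) ∨ (∃ i, v = Sum.inr (i,2)) ∨
      (∃ i, v = Sum.inr (i,3)) with hP
  refine ⟨Finset.univ.filter P, ?_, ?_⟩
  · have hmem : ∀ u, u ∈ (↑(Finset.univ.filter P) : Set (Unit ⊕ Fin k × Fin 4)) ↔ P u := by
      intro u; simp
    intro v hv
    have hv' : P v := (hmem v).mp hv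
    rcases hv' with rfl | rfl | ⟨i, rfl⟩ | ⟨i, rfl⟩
    · refine ⟨Sum.inr (i0, 0), (adj_c _).mpr ⟨i0, rfl⟩, ?_⟩
      intro u hu hne hadj
      rcases (adj0 i0 u).mp hadj.symm with rfl | rfl
      · exact hne rfl
      · have h1 : P (Sum.inr (i0, 1)) := (hmem _).mp hu
        simp [hP, Prod.ext_iff] at h1
    · refine ⟨Sum.inl (), (adj0 i0 _).mpr (Or.inl rfl), ?_⟩
      intro u hu hne hadj
      obtain ⟨j, rfl⟩ := (adj_c u).mp hadj.symm
      have hPu : P (Sum.inr (j, 0)) := (hmem _).mp hu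
      have hj : j = i0 := by
        simp [hP, Prod.ext_iff] at hPu
        exact hPu
      exact hne (by rw [hj])
    · refine ⟨Sum.inr (i, 3), (adj2 i _).mpr (Or.inr rfl), ?_⟩
      intro u hu hne hadj
      exact hne ((adj3 i u).mp hadj.symm)
    · refine ⟨Sum.inr (i, 2), (adj3 i _).mpr rfl, ?_⟩
      intro u hu hne hadj
      rcases (adj2 i u).mp hadj.symm with rfl | rfl
      · have h1 : P (Sum.inr (i, 1)) := (hmem _).mp hu
        simp [hP, Prod.ext_iff] at h1
      · exact hne rfl
  · rw [Finset.card_filter, Fintype.sum_sum_type, Fintype.sum_prod_type]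
    simp only [Fin.sum_univ_four]
    have h1 : ∀ i : Fin k, ((if P (Sum.inr (i,0)) then 1 else 0) +
        (if P (Sum.inr (i,1)) then 1 else 0) + (if P (Sum.inr (i,2)) then 1 else 0) +
        (if P (Sum.inr (i,3)) then 1 else 0) : ℕ) = (if i = i0 then 1 else 0) + 2 := by
      intro i
      by_cases hii : i = i0 <;> simp [hP, hii, Prod.ext_iff]
    rw [Finset.sum_congr rfl (fun i _ => h1 i)]
    rw [Finset.sum_add_distrib, Finset.sum_ite_eq' Finset.univ i0 (fun _ => 1)]
    simp [hP]
    omega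

end T3aux

/-- For `k ≥ 4`, `OOIR(T_k) = 2(k+1)` for the thrice-subdivided star. -/
theorem stmt14 (k : ℕ) (hk : 4 ≤ k) : ooirNum (T3star k) = 2 * (k + 1) := by
  obtain ⟨S0, hS0, hcard⟩ := T3aux.lower hk
  have hub : ∀ n ∈ {n | ∃ S : Finset (Unit ⊕ Fin k × Fin 4),
      isOOIrr (T3star k) ↑S ∧ S.card = n}, n ≤ 2 * (k + 1) := by
    rintro n ⟨S, hS, rfl⟩
    exact T3aux.upper hS (by omega)
  have hmem : 2 * (k + 1) ∈ {n | ∃ S : Finset (Unit ⊕ Fin k × Fin 4),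
      isOOIrr (T3star k) ↑S ∧ S.card = n} := ⟨S0, hS0, hcard⟩
  exact le_antisymm (csSup_le ⟨_, hmem⟩ hub) (le_csSup ⟨2 * (k + 1), hub⟩ hmem)
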